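/- Let k > 2 be an integer with k ≢ 2 (mod 4) and let x be an integer. Then Φ_k(x) = ±1 if and only if one of the following holds: x = 0; or x = 1 and k is not a prime power p^ℓ with ℓ > 0; or x = -1 and k is not of the form 2^ℓ with ℓ > 1. Moreover, Φ_k(1) = p whenever k = p^ℓ is a prime power, and Φ_{2^ℓ}(-1) = 2 whenever ℓ > 1. -/

import Mathlib

open Polynomial

private lemma neg_prim_odd {ζ : ℂ} {k : ℕ} (hk1 : 1 < k) (hk : Odd k)
    (h : IsPrimitiveRoot ζ (2 * k)) : IsPrimitiveRoot (-ζ) k := by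
  have hzk : ζ ^ k = -1 := by
    have h2 : ζ ^ k * ζ ^ k = 1 := by
      rw [← pow_add]
      have : k + k = 2 * k := by ring
      rw [this, h.pow_eq_one]
    rcases mul_self_eq_one_iff.mp h2 with h1 | h1
    · exfalso
      have hdvd := h.dvd_of_pow_eq_one k h1
      have := Nat.le_of_dvd (by omega) hdvd
      omega
    · exact h1
  constructor
  · rw [hk.neg_pow, hzk, neg_neg]
  · intro l hl
    rcases Nat.even_or_odd l with he | ho
    · rw [he.neg_pow] at hl
      exact (dvd_mul_left k 2).trans (h.dvd_of_pow_eq_one l hl)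
    · rw [ho.neg_pow, neg_eq_iff_eq_neg] at hl
      have h2 : ζ ^ (2 * l) = 1 := by
        rw [two_mul, pow_add, hl, neg_mul_neg, one_mul]
      rcases h.dvd_of_pow_eq_one _ h2 with ⟨c, hc⟩
      rw [mul_assoc] at hc
      exact ⟨c, by omega⟩

private lemma neg_prim_four {ζ : ℂ} {k : ℕ} (hk0 : 0 < k) (hk : 4 ∣ k)
    (h : IsPrimitiveRoot ζ k) : IsPrimitiveRoot (-ζ) k := by
  have hke : Even k := by
    rcases hk with ⟨m, rfl⟩; exact ⟨2 * m, by ring⟩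
  constructor
  · rw [hke.neg_pow, h.pow_eq_one]
  · intro l hl
    rcases Nat.even_or_odd l with he | ho
    · rw [he.neg_pow] at hl
      exact h.dvd_of_pow_eq_one l hl
    · exfalso
      rw [ho.neg_pow, neg_eq_iff_eq_neg] at hl
      have h2 : ζ ^ (2 * l) = 1 := by
        rw [two_mul, pow_add, hl, neg_mul_neg, one_mul]
      have hdvd := h.dvd_of_pow_eq_one _ h2
      rcases hk with ⟨m, rfl⟩
      rcases hdvd with ⟨c, hc⟩
      rw [mul_assoc] at hc
      rcases ho with ⟨j, rfl⟩
      omega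

private lemma comp_neg_X_monic {k : ℕ} (hk : 2 < k) :
    ((cyclotomic k ℤ).comp (-X)).Monic := by
  have hdeg : (-X : ℤ[X]).natDegree ≠ 0 := by
    rw [natDegree_neg, natDegree_X]; exact one_ne_zero
  unfold Monic
  rw [leadingCoeff_comp hdeg, (cyclotomic.monic k ℤ).leadingCoeff,
    leadingCoeff_neg, leadingCoeff_X, natDegree_cyclotomic,
    (Nat.totient_even hk).neg_one_pow, one_mul]

private lemma aeval_neg_cyclo {k : ℕ} (hk : 0 < k) {ζ : ℂ}
    (h : IsPrimitiveRoot ζ k) : aeval ζ (cyclotomic k ℤ) = 0 := by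
  rw [aeval_def, eval₂_eq_eval_map, map_cyclotomic]
  exact h.isRoot_cyclotomic hk

private lemma cyclo_comp_neg_odd {k : ℕ} (hk1 : 1 < k) (hk : Odd k) :
    cyclotomic (2 * k) ℤ = (cyclotomic k ℤ).comp (-X) := by
  have h2kpos : 0 < 2 * k := by omega
  obtain ⟨ζ, hζ⟩ : ∃ ζ : ℂ, IsPrimitiveRoot ζ (2 * k) :=
    ⟨_, Complex.isPrimitiveRoot_exp (2 * k) (by omega)⟩
  have hprim : IsPrimitiveRoot (-ζ) k := neg_prim_odd hk1 hk hζ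
  have hmin := cyclotomic_eq_minpoly hζ h2kpos
  have haeval : aeval ζ ((cyclotomic k ℤ).comp (-X)) = 0 := by
    rw [aeval_comp, map_neg, aeval_X]
    exact aeval_neg_cyclo (k := k) (by omega) hprim
  have hdvd : cyclotomic (2 * k) ℤ ∣ (cyclotomic k ℤ).comp (-X) := by
    have := minpoly.isIntegrallyClosed_dvd (hζ.isIntegral h2kpos) haeval
    rwa [← hmin] at this
  have hmonic := comp_neg_X_monic (by rcases hk with ⟨j, hj⟩; omega : 2 < k)
  have hdeg : ((cyclotomic k ℤ).comp (-X)).natDegree ≤ (cyclotomic (2 * k) ℤ).natDegree := by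
    rw [natDegree_comp, natDegree_neg, natDegree_X, natDegree_cyclotomic,
      natDegree_cyclotomic, Nat.totient_mul (Nat.coprime_two_left.mpr hk),
      Nat.totient_two, one_mul, mul_one]
  exact (eq_of_monic_of_dvd_of_natDegree_le (cyclotomic.monic _ ℤ) hmonic hdvd hdeg).symm

private lemma cyclo_comp_neg_four {k : ℕ} (hk0 : 0 < k) (hk : 4 ∣ k) :
    cyclotomic k ℤ = (cyclotomic k ℤ).comp (-X) := by
  have hk4 : 4 ≤ k := Nat.le_of_dvd hk0 hk
  obtain ⟨ζ, hζ⟩ : ∃ ζ : ℂ, IsPrimitiveRoot ζ k :=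
    ⟨_, Complex.isPrimitiveRoot_exp k (by omega)⟩
  have hprim := neg_prim_four hk0 hk hζ
  have hmin := cyclotomic_eq_minpoly hζ hk0
  have haeval : aeval ζ ((cyclotomic k ℤ).comp (-X)) = 0 := by
    rw [aeval_comp, map_neg, aeval_X]
    exact aeval_neg_cyclo hk0 hprim
  have hdvd : cyclotomic k ℤ ∣ (cyclotomic k ℤ).comp (-X) := by
    have := minpoly.isIntegrallyClosed_dvd (hζ.isIntegral hk0) haeval
    rwa [← hmin] at this
  have hmonic := comp_neg_X_monic (by omega : 2 < k)
  have hdeg : ((cyclotomic k ℤ).comp (-X)).natDegree ≤ (cyclotomic k ℤ).natDegree := by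
    rw [natDegree_comp, natDegree_neg, natDegree_X, mul_one]
  exact (eq_of_monic_of_dvd_of_natDegree_le (cyclotomic.monic _ ℤ) hmonic hdvd hdeg).symm

private lemma one_lt_eval_of_two_le {n : ℕ} (hn : 2 < n) {y : ℤ} (hy : 2 ≤ y) :
    1 < (cyclotomic n ℤ).eval y := by
  have hy' : y = ((y.toNat : ℕ) : ℤ) := by omega
  have hq : y.toNat ≠ 1 := by omega
  have h1 := sub_one_pow_totient_lt_natAbs_cyclotomic_eval (by omega : 1 < n) hq
  have h2 : 1 ≤ (y.toNat - 1) ^ n.totient := Nat.one_le_pow _ _ (by omega)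
  have h3 : 0 < (cyclotomic n ℤ).eval y := cyclotomic_pos hn y
  rw [hy']
  rw [hy'] at h3
  omega

private lemma not_prime_pow_two_mul_odd {k : ℕ} (hk1 : 1 < k) (hk : Odd k) :
    ∀ {p : ℕ}, p.Prime → ∀ m : ℕ, p ^ m ≠ 2 * k := by
  intro p hp m hpm
  have h2 : 2 ∣ p ^ m := by rw [hpm]; exact ⟨k, rfl⟩
  have hp2 : p = 2 := ((Nat.prime_dvd_prime_iff_eq Nat.prime_two hp).mp
    (Nat.prime_two.dvd_of_dvd_pow h2)).symm
  subst hp2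
  rcases m with _ | m
  · simp at hpm; omega
  · rw [pow_succ, mul_comm] at hpm
    have hkm : k = 2 ^ m := by omega
    rcases m with _ | m
    · simp at hkm; omega
    · have : 2 ∣ k := by rw [hkm, pow_succ]; exact ⟨2 ^ m, by ring⟩
      rcases hk with ⟨j, hj⟩
      omega

theorem stmt7 (k : ℕ) (hk : 2 < k) (hk4 : k % 4 ≠ 2) (x : ℤ) :
    (((cyclotomic k ℤ).eval x = 1 ∨ (cyclotomic k ℤ).eval x = -1) ↔
      (x = 0 ∨
        (x = 1 ∧ ¬ ∃ (p ℓ : ℕ), p.Prime ∧ 0 < ℓ ∧ k = p ^ ℓ) ∨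
        (x = -1 ∧ ¬ ∃ ℓ : ℕ, 1 < ℓ ∧ k = 2 ^ ℓ))) ∧
    (∀ (p ℓ : ℕ), p.Prime → 0 < ℓ → k = p ^ ℓ → (cyclotomic k ℤ).eval 1 = (p : ℤ)) ∧
    (∀ ℓ : ℕ, 1 < ℓ → (cyclotomic (2 ^ ℓ) ℤ).eval (-1) = 2) := by
  haveI : Fact (Nat.Prime 2) := ⟨Nat.prime_two⟩
  -- Part 2
  have part2 : ∀ (p ℓ : ℕ), p.Prime → 0 < ℓ → k = p ^ ℓ →
      (cyclotomic k ℤ).eval 1 = (p : ℤ) := by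
    intro p ℓ hp hℓ hkp
    haveI : Fact p.Prime := ⟨hp⟩
    obtain ⟨m, rfl⟩ : ∃ m, ℓ = m + 1 := ⟨ℓ - 1, by omega⟩
    rw [hkp]
    exact eval_one_cyclotomic_prime_pow m
  -- Part 3
  have part3 : ∀ ℓ : ℕ, 1 < ℓ → (cyclotomic (2 ^ ℓ) ℤ).eval (-1) = 2 := by
    intro ℓ hℓ
    have h4 : 4 ∣ 2 ^ ℓ := by
      have : (2 : ℕ) ^ 2 ∣ 2 ^ ℓ := pow_dvd_pow 2 hℓ
      simpa using this
    have hcomp := cyclo_comp_neg_four (by positivity : 0 < 2 ^ ℓ) h4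
    have : (cyclotomic (2 ^ ℓ) ℤ).eval (-1) = (cyclotomic (2 ^ ℓ) ℤ).eval 1 := by
      conv_lhs => rw [hcomp]
      rw [eval_comp, eval_neg, eval_X, neg_neg]
    rw [this]
    obtain ⟨m, rfl⟩ : ∃ m, ℓ = m + 1 := ⟨ℓ - 1, by omega⟩
    have := eval_one_cyclotomic_prime_pow (R := ℤ) (p := 2) m
    rw [this]; norm_num
  -- parity
  have hparity : Odd k ∨ 4 ∣ k := by
    rcases Nat.even_or_odd k with he | ho
    · right; rcases he with ⟨m, hm⟩; omega
    · left; exact ho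
  -- eval at -1
  have hneg1 : (¬ ∃ ℓ : ℕ, 1 < ℓ ∧ k = 2 ^ ℓ) → (cyclotomic k ℤ).eval (-1) = 1 := by
    intro hnot
    rcases hparity with hodd | h4
    · have hcomp := cyclo_comp_neg_odd (by omega : 1 < k) hodd
      have h1 : (cyclotomic (2 * k) ℤ).eval 1 = (cyclotomic k ℤ).eval (-1) := by
        rw [hcomp, eval_comp, eval_neg, eval_X]
      rw [← h1]
      exact eval_one_cyclotomic_not_prime_pow
        (fun hp m => not_prime_pow_two_mul_odd (by omega) hodd hp m)
    · have hcomp := cyclo_comp_neg_four (by omega : 0 < k) h4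
      have h1 : (cyclotomic k ℤ).eval (-1) = (cyclotomic k ℤ).eval 1 := by
        conv_lhs => rw [hcomp]
        rw [eval_comp, eval_neg, eval_X, neg_neg]
      rw [h1]
      refine eval_one_cyclotomic_not_prime_pow ?_
      intro p hp m hpm
      have h2 : 2 ∣ p ^ m := dvd_trans ⟨2, by norm_num⟩ (hpm ▸ h4)
      have hp2 : p = 2 := ((Nat.prime_dvd_prime_iff_eq Nat.prime_two hp).mp
        (Nat.prime_two.dvd_of_dvd_pow h2)).symm
      subst hp2
      have hm2 : 1 < m := by
        rcases m with _ | _ | m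
        · rw [pow_zero] at hpm; omega
        · rw [pow_one] at hpm; omega
        · omega
      exact hnot ⟨m, hm2, hpm.symm⟩
  -- eval at y ≤ -2
  have hkeyneg : ∀ y : ℤ, y ≤ -2 → 1 < (cyclotomic k ℤ).eval y := by
    intro y hy
    rcases hparity with hodd | h4
    · have hcomp := cyclo_comp_neg_odd (by omega : 1 < k) hodd
      have h1 : (cyclotomic (2 * k) ℤ).eval (-y) = (cyclotomic k ℤ).eval y := by
        rw [hcomp, eval_comp, eval_neg, eval_X, neg_neg]
      rw [← h1]
      exact one_lt_eval_of_two_le (by omega) (by omega)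
    · have hcomp := cyclo_comp_neg_four (by omega : 0 < k) h4
      have h1 : (cyclotomic k ℤ).eval y = (cyclotomic k ℤ).eval (-y) := by
        conv_lhs => rw [hcomp]
        rw [eval_comp, eval_neg, eval_X]
      rw [h1]
      exact one_lt_eval_of_two_le hk (by omega)
  refine ⟨?_, part2, part3⟩
  constructor
  · intro h
    have hpos : 0 < (cyclotomic k ℤ).eval x := cyclotomic_pos hk x
    have h1 : (cyclotomic k ℤ).eval x = 1 := by rcases h with h | h <;> omega
    rcases lt_trichotomy x 0 with hx | hx | hx
    · rcases eq_or_lt_of_le (show x ≤ -1 by omega) with hx1 | hx1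
      · subst hx1
        right; right
        refine ⟨rfl, ?_⟩
        rintro ⟨ℓ, hℓ, rfl⟩
        have := part3 ℓ hℓ
        omega
      · exfalso
        have := hkeyneg x (by omega)
        omega
    · left; exact hx
    · rcases eq_or_lt_of_le (show 1 ≤ x by omega) with hx1 | hx1
      · have hx1' : x = 1 := hx1.symm
        subst hx1'
        right; left
        refine ⟨rfl, ?_⟩
        rintro ⟨p, ℓ, hp, hℓ, hkp⟩
        have h2 := part2 p ℓ hp hℓ hkp
        have hp2 : 2 ≤ p := hp.two_le
        have : (2 : ℤ) ≤ (p : ℤ) := by exact_mod_cast hp2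
        omega
      · exfalso
        have := one_lt_eval_of_two_le hk (show (2 : ℤ) ≤ x by omega)
        omega
  · intro h
    left
    rcases h with rfl | ⟨rfl, hnot⟩ | ⟨rfl, hnot⟩
    · rw [← coeff_zero_eq_eval_zero, cyclotomic_coeff_zero ℤ (by omega : 1 < k)]
    · exact eval_one_cyclotomic_not_prime_pow (by
        intro p hp m hpm
        have hm : 0 < m := by
          rcases m with _ | m
          · simp at hpm; omega
          · omega
        exact hnot ⟨p, m, hp, hm, hpm.symm⟩)
    · exact hneg1 hnot
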